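/- Let E be a real inner product space, f(p) ∈ ℝ, g, G ∈ E (exact and approximate gradients), H, B : E →L[ℝ] E (exact and approximate Hessians), and v ∈ E. Suppose (i) f(R(v)) ≤ f(p) + ⟨g, v⟩ + (1/2)⟨H v, v⟩ + (L/6)‖v‖³ for the true values, (ii) the cubic model value f(p) + ⟨G, v⟩ + (1/2)⟨B v, v⟩ + (2^α σ/6)‖v‖³ ≤ f(p), (iii) ‖g − G‖ ≤ (κ_g/2^(α-1))·w² and ‖H − B‖ ≤ (κ_B/2^(α-1))·w for some w ≥ 0, and (iv) 2^(α-1)·σ ≥ 12(2κ_g + κ_B) + L with σ ≥ σ₁ > 0. Then f(R(v)) ≤ f(p) + (σ/24)·w³ − (2^α σ/24)·‖v‖³. -/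

import Mathlib

open scoped RealInnerProductSpace

set_option maxHeartbeats 1600000 in
theorem stmt_3 {E : Type*} [NormedAddCommGroup E] [InnerProductSpace ℝ E]
    (fp fR : ℝ) (g G v : E) (H B : E →L[ℝ] E)
    (L σ σ₁ κg κB w : ℝ) (α : ℕ)
    (hL : 0 ≤ L) (hσ₁ : 0 < σ₁) (hσ : σ₁ ≤ σ) (hκg : 0 ≤ κg) (hκB : 0 ≤ κB)
    (hw : 0 ≤ w)
    (hTaylor : fR ≤ fp + ⟪g, v⟫ + (1 / 2) * ⟪H v, v⟫ + (L / 6) * ‖v‖ ^ 3)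
    (hmodel : fp + ⟪G, v⟫ + (1 / 2) * ⟪B v, v⟫ + (2 ^ α * σ / 6) * ‖v‖ ^ 3 ≤ fp)
    (hg : ‖g - G‖ ≤ (κg / (2 ^ α / 2)) * w ^ 2)
    (hH : ‖H - B‖ ≤ (κB / (2 ^ α / 2)) * w)
    (hα : 2 ^ α * σ / 2 ≥ 12 * (2 * κg + κB) + L) :
    fR ≤ fp + (σ / 24) * w ^ 3 - (2 ^ α * σ / 24) * ‖v‖ ^ 3 := by
  set P : ℝ := 2 ^ α with hPdef
  have hP1 : (1 : ℝ) ≤ P := one_le_pow₀ (by norm_num : (1:ℝ) ≤ 2)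
  have hP0 : (0 : ℝ) < P := lt_of_lt_of_le one_pos hP1
  set t : ℝ := ‖v‖ with htdef
  have ht0 : 0 ≤ t := norm_nonneg v
  have hσ0 : 0 < σ := lt_of_lt_of_le hσ₁ hσ
  -- inner product bounds
  have ha : ⟪g - G, v⟫ ≤ ‖g - G‖ * t := real_inner_le_norm _ _
  have hb : ⟪(H - B) v, v⟫ ≤ ‖H - B‖ * t * t := by
    calc ⟪(H - B) v, v⟫ ≤ ‖(H - B) v‖ * ‖v‖ := real_inner_le_norm _ _
    _ ≤ ‖H - B‖ * ‖v‖ * ‖v‖ := by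
        gcongr
        exact (H - B).le_opNorm v
  have hg' : ‖g - G‖ * P ≤ 2 * κg * w ^ 2 := by
    have h2 : κg / (P / 2) * w ^ 2 * P = 2 * κg * w ^ 2 := by
      field_simp
    calc ‖g - G‖ * P ≤ κg / (P / 2) * w ^ 2 * P := by
          exact mul_le_mul_of_nonneg_right hg hP0.le
      _ = 2 * κg * w ^ 2 := h2
  have hH' : ‖H - B‖ * P ≤ 2 * κB * w := by
    have h2 : κB / (P / 2) * w * P = 2 * κB * w := by
      field_simp
    calc ‖H - B‖ * P ≤ κB / (P / 2) * w * P := by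
          exact mul_le_mul_of_nonneg_right hH hP0.le
      _ = 2 * κB * w := h2
  have haP : ⟪g - G, v⟫ * P ≤ 2 * κg * w ^ 2 * t := by
    calc ⟪g - G, v⟫ * P ≤ ‖g - G‖ * t * P := mul_le_mul_of_nonneg_right ha hP0.le
      _ = ‖g - G‖ * P * t := by ring
      _ ≤ 2 * κg * w ^ 2 * t := mul_le_mul_of_nonneg_right hg' ht0
  have hbP : ⟪(H - B) v, v⟫ * P ≤ 2 * κB * w * t ^ 2 := by
    calc ⟪(H - B) v, v⟫ * P ≤ ‖H - B‖ * t * t * P := mul_le_mul_of_nonneg_right hb hP0.le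
      _ = ‖H - B‖ * P * (t * t) := by ring
      _ ≤ 2 * κB * w * (t * t) := by
          apply mul_le_mul_of_nonneg_right hH' (mul_nonneg ht0 ht0)
      _ = 2 * κB * w * t ^ 2 := by ring
  -- expand inner differences
  have e1 : ⟪g - G, v⟫ = ⟪g, v⟫ - ⟪G, v⟫ := inner_sub_left _ _ _
  have e2 : ⟪(H - B) v, v⟫ = ⟪H v, v⟫ - ⟪B v, v⟫ := by
    rw [ContinuousLinearMap.sub_apply, inner_sub_left]
  -- Young-type inequalities
  have hy1 : 0 ≤ κg * (2 * w ^ 3 + t ^ 3 - 3 * w ^ 2 * t) := by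
    apply mul_nonneg hκg
    nlinarith [sq_nonneg (w - t), mul_nonneg (sq_nonneg (w - t)) (by linarith : 0 ≤ 2 * w + t)]
  have hy2 : 0 ≤ κB * (w ^ 3 + 2 * t ^ 3 - 3 * w * t ^ 2) := by
    apply mul_nonneg hκB
    nlinarith [mul_nonneg (sq_nonneg (w - t)) (by linarith : 0 ≤ w + 2 * t)]
  have hα' : 24 * (2 * κg + κB) + 2 * L ≤ P * σ := by linarith
  have h4 : 0 ≤ (P * σ - (24 * (2 * κg + κB) + 2 * L)) * (P * t ^ 3) :=
    mul_nonneg (by linarith) (mul_nonneg hP0.le (pow_nonneg ht0 3))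
  have h5 : 0 ≤ (P * σ - (24 * (2 * κg + κB) + 2 * L)) * w ^ 3 :=
    mul_nonneg (by linarith) (pow_nonneg hw 3)
  have h6 : 0 ≤ (P - 1) * (κg * t ^ 3) :=
    mul_nonneg (by linarith) (mul_nonneg hκg (pow_nonneg ht0 3))
  have h7 : 0 ≤ (P - 1) * (κB * t ^ 3) :=
    mul_nonneg (by linarith) (mul_nonneg hκB (pow_nonneg ht0 3))
  have h8 : 0 ≤ (P - 1) * (L * t ^ 3) :=
    mul_nonneg (by linarith) (mul_nonneg hL (pow_nonneg ht0 3))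
  have hw3 : 0 ≤ κg * w ^ 3 := mul_nonneg hκg (pow_nonneg hw 3)
  have hw3' : 0 ≤ κB * w ^ 3 := mul_nonneg hκB (pow_nonneg hw 3)
  have hLw3 : 0 ≤ L * w ^ 3 := mul_nonneg hL (pow_nonneg hw 3)
  have ht3a : 0 ≤ κg * t ^ 3 := mul_nonneg hκg (pow_nonneg ht0 3)
  have ht3b : 0 ≤ κB * t ^ 3 := mul_nonneg hκB (pow_nonneg ht0 3)
  have ht3c : 0 ≤ L * t ^ 3 := mul_nonneg hL (pow_nonneg ht0 3)
  -- key inequality (multiplied by P)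
  have hkey : P * (⟪g - G, v⟫ + (1 / 2) * ⟪(H - B) v, v⟫) ≤
      P * (σ / 24 * w ^ 3 + (P * σ / 8 - L / 6) * t ^ 3) := by
    linarith [haP, hbP, hy1, hy2, h4, h5, h6, h7, h8, hw3, hw3', hLw3, ht3a, ht3b, ht3c]
  have hkey' : ⟪g - G, v⟫ + (1 / 2) * ⟪(H - B) v, v⟫ ≤
      σ / 24 * w ^ 3 + (P * σ / 8 - L / 6) * t ^ 3 :=
    le_of_mul_le_mul_left hkey hP0
  rw [e1, e2] at hkey'
  linarith [hTaylor, hmodel, hkey']
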